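/- arXiv:0810.1539 — 2 statements merged into one kernel-verified Lean document; each statement's English description precedes it below -/
import Mathlib

section
/- Let Δ be a (d−1)-dimensional simplicial complex with d ≥ 2 satisfying properties (I)–(III), let S ⊆ {1,…,d} with |S| = 2, and let T be any spanning tree of the 1-skeleton of Δ. Then the group G(Δ,T) is generated by the images of the generators (v,v′) with {v,v′} ∈ Δ_S. -/
/-- `Δ` is an (abstract) simplicial complex on the (finite) vertex set `V`:
faces are closed under taking subsets and every singleton is a face. -/
def IsComplex {V : Type*} [DecidableEq V] (Δ : Set (Finset V)) : Prop :=
  (∀ F ∈ Δ, ∀ G, G ⊆ F → G ∈ Δ) ∧ ∀ v : V, ({v} : Finset V) ∈ Δ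

/-- `F` is a facet (maximal face) of the collection of faces `Δ`. -/
def IsFacet {V : Type*} (Δ : Set (Finset V)) (F : Finset V) : Prop :=
  F ∈ Δ ∧ ∀ G ∈ Δ, F ⊆ G → G = F

/-- Every facet has `d` vertices, i.e. dimension `d - 1`. -/
def IsPure {V : Type*} (Δ : Set (Finset V)) (d : ℕ) : Prop :=
  ∀ F, IsFacet Δ F → F.card = d

/-- `Δ` has dimension `d - 1`: all faces have at most `d` vertices and some face has `d`. -/
def HasDim {V : Type*} (Δ : Set (Finset V)) (d : ℕ) : Prop :=
  (∀ F ∈ Δ, F.card ≤ d) ∧ ∃ F ∈ Δ, F.card = d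

/-- The link of the face `F`. -/
def link {V : Type*} [DecidableEq V] (Δ : Set (Finset V)) (F : Finset V) : Set (Finset V) :=
  {G | G ∈ Δ ∧ Disjoint F G ∧ F ∪ G ∈ Δ}

/-- The closed star of the face `F`. -/
def closedStar {V : Type*} [DecidableEq V] (Δ : Set (Finset V)) (F : Finset V) :
    Set (Finset V) :=
  {G | G ∈ Δ ∧ F ∪ G ∈ Δ}

/-- The collection of faces `K` is connected: any two of its vertices are joined by a
walk along its `1`-dimensional faces. -/
def Conn {V : Type*} [DecidableEq V] (K : Set (Finset V)) : Prop :=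
  ∀ v w : V, ({v} : Finset V) ∈ K → ({w} : Finset V) ∈ K →
    Relation.ReflTransGen (fun a b => ({a, b} : Finset V) ∈ K) v w

/-- Property (III): the link of every face with fewer than `d - 1` vertices
(including the empty face) is connected. -/
def LinksConn {V : Type*} [DecidableEq V] (Δ : Set (Finset V)) (d : ℕ) : Prop :=
  ∀ F ∈ Δ, F.card < d - 1 → Conn (link Δ F)

/-- Property (II): `Δ` is balanced with respect to the coloring `κ`:
the coloring is injective on every face. -/
def IsBalanced {V : Type*} {d : ℕ} (Δ : Set (Finset V)) (κ : V → Fin d) : Prop :=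
  ∀ F ∈ Δ, Set.InjOn κ ↑F

/-- The rank-selected subcomplex `Δ_S`. -/
def rankSel {V : Type*} {d : ℕ} (Δ : Set (Finset V)) (κ : V → Fin d) (S : Finset (Fin d)) :
    Set (Finset V) :=
  {F | F ∈ Δ ∧ ∀ v ∈ F, κ v ∈ S}

/-- `Δ` is strongly connected: any two facets are joined by a chain of facets
in which consecutive facets share `d - 1` vertices. -/
def StronglyConnected {V : Type*} [DecidableEq V] (Δ : Set (Finset V)) (d : ℕ) : Prop :=
  ∀ F F', IsFacet Δ F → IsFacet Δ F' →
    Relation.ReflTransGen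
      (fun A B => IsFacet Δ A ∧ IsFacet Δ B ∧ (A ∩ B).card = d - 1) F F'

/-- The generators of the group `G(Δ, T)`: ordered pairs of vertices spanning a face
of `Δ`. -/
def EdgeGen {V : Type*} [DecidableEq V] (Δ : Set (Finset V)) : Type _ :=
  {p : V × V // ({p.1, p.2} : Finset V) ∈ Δ}

/-- The relations of the group `G(Δ, T)`: [R1] `(v,v') = 1` whenever `{v,v'}` is an
edge of the spanning tree `T`, and [R2] `(v,v')(v',v'') = (v,v'')` whenever
`{v,v',v''} ∈ Δ`. -/
def GRels {V : Type*} [DecidableEq V] (Δ : Set (Finset V)) (T : SimpleGraph V) :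
    Set (FreeGroup (EdgeGen Δ)) :=
  {r | (∃ p : EdgeGen Δ, T.Adj p.1.1 p.1.2 ∧ r = FreeGroup.of p) ∨
    (∃ (x y z : V) (h1 : ({x, y} : Finset V) ∈ Δ) (h2 : ({y, z} : Finset V) ∈ Δ)
      (h3 : ({x, z} : Finset V) ∈ Δ), ({x, y, z} : Finset V) ∈ Δ ∧
      r = FreeGroup.of (⟨(x, y), h1⟩ : EdgeGen Δ) * FreeGroup.of (⟨(y, z), h2⟩ : EdgeGen Δ) *
        (FreeGroup.of (⟨(x, z), h3⟩ : EdgeGen Δ))⁻¹)}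

/-- Auxiliary packaging of properties of a pure complex with connected links -/
structure GoodAux {V : Type*} [DecidableEq V] {d : ℕ} (κ : V → Fin d)
    (Γ : Set (Finset V)) (m : ℕ) (S : Finset (Fin d)) : Prop where
  closed : ∀ F ∈ Γ, ∀ G ⊆ F, G ∈ Γ
  bound : ∀ F ∈ Γ, F.card ≤ m
  toFacet : ∀ F ∈ Γ, ∃ G ∈ Γ, F ⊆ G ∧ G.card = m
  links : ∀ F ∈ Γ, F.card < m - 1 → Conn (link Γ F)
  balanced : ∀ F ∈ Γ, Set.InjOn κ ↑F
  scond : ∀ F ∈ Γ, F.card = m → ∀ s ∈ S, ∃ v ∈ F, κ v = s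

theorem goodAux_link {V : Type*} [DecidableEq V] {d : ℕ} {κ : V → Fin d}
    {Γ : Set (Finset V)} {m : ℕ} {S : Finset (Fin d)} (hG : GoodAux κ Γ m S)
    {x : V} (hx : ({x} : Finset V) ∈ Γ) (hxS : κ x ∉ S) (hm : 2 ≤ m) :
    GoodAux κ (link Γ {x}) (m - 1) S := by
  have hmemx : ∀ G ∈ link Γ {x}, x ∉ G := by
    intro G hGm
    exact fun hxG => (Finset.disjoint_singleton_left.1 hGm.2.1) hxG
  have hunion : ∀ G : Finset V, ({x} : Finset V) ∪ G = insert x G := by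
    intro G; exact (Finset.insert_eq x G).symm
  constructor
  · -- closed
    intro F hF G hGF
    exact ⟨hG.closed F hF.1 G hGF, Finset.disjoint_singleton_left.2
      (fun hxG => hmemx F hF (hGF hxG)),
      hG.closed _ hF.2.2 _ (Finset.union_subset_union_right hGF)⟩
  · -- bound
    intro F hF
    have h1 : (({x} : Finset V) ∪ F).card ≤ m := hG.bound _ hF.2.2
    have h2 : (({x} : Finset V) ∪ F).card = F.card + 1 := by
      rw [hunion, Finset.card_insert_of_notMem (hmemx F hF)]
    omega
  · -- toFacet
    intro F hF
    obtain ⟨G, hGmem, hsub, hcard⟩ := hG.toFacet _ hF.2.2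
    have hxG : x ∈ G := hsub (by simp)
    refine ⟨G.erase x, ⟨hG.closed G hGmem _ (Finset.erase_subset x G),
      Finset.disjoint_singleton_left.2 (Finset.notMem_erase x G), ?_⟩,
      Finset.subset_erase.2 ⟨(Finset.union_subset_iff.1 hsub).2, hmemx F hF⟩, ?_⟩
    · rw [hunion, Finset.insert_erase hxG]; exact hGmem
    · rw [Finset.card_erase_of_mem hxG, hcard]
  · -- links
    intro F hF hcard
    have hxF : x ∉ F := hmemx F hF
    have key : link (link Γ {x}) F = link Γ (({x} : Finset V) ∪ F) := by
      ext H
      constructor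
      · rintro ⟨⟨hH1, hH2, hH3⟩, hdisj, hFH1, hFH2, hFH3⟩
        refine ⟨hH1, ?_, ?_⟩
        · rw [Finset.disjoint_union_left]; exact ⟨hH2, hdisj⟩
        · rw [Finset.union_assoc]; exact hFH3
      · rintro ⟨hH1, hdisj, hmem⟩
        rw [Finset.disjoint_union_left] at hdisj
        rw [Finset.union_assoc] at hmem
        refine ⟨⟨hH1, hdisj.1, hG.closed _ hmem _ ?_⟩, hdisj.2,
          hG.closed _ hmem _ (Finset.subset_union_right), ?_, hmem⟩
        · exact Finset.union_subset Finset.subset_union_left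
            (Finset.subset_union_right.trans (Finset.subset_union_right))
        · exact Finset.disjoint_union_right.2
            ⟨Finset.disjoint_singleton_left.2 hxF, hdisj.1⟩
    rw [key]
    apply hG.links _ hF.2.2
    have : (({x} : Finset V) ∪ F).card = F.card + 1 := by
      rw [hunion, Finset.card_insert_of_notMem hxF]
    omega
  · -- balanced
    intro F hF; exact hG.balanced F hF.1
  · -- scond
    intro F hF hcard s hs
    have hcard2 : (({x} : Finset V) ∪ F).card = m := by
      rw [hunion, Finset.card_insert_of_notMem (hmemx F hF), hcard]; omega
    obtain ⟨v, hv, hkv⟩ := hG.scond _ hF.2.2 hcard2 s hs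
    rw [hunion, Finset.mem_insert] at hv
    rcases hv with rfl | hv
    · exact absurd (hkv ▸ hs) hxS
    · exact ⟨v, hv, hkv⟩

theorem rankSel_conn {V : Type*} [DecidableEq V] {d : ℕ} (κ : V → Fin d)
    (S : Finset (Fin d)) (hS : S.card = 2) :
    ∀ m : ℕ, 2 ≤ m → ∀ Γ : Set (Finset V), GoodAux κ Γ m S →
    ∀ a b : V, ({a} : Finset V) ∈ Γ → ({b} : Finset V) ∈ Γ → κ a ∈ S → κ b ∈ S →
    Relation.ReflTransGen
      (fun x y => ({x, y} : Finset V) ∈ Γ ∧ κ x ∈ S ∧ κ y ∈ S) a b := by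
  intro m hm2
  induction m, hm2 using Nat.le_induction with
  | base =>
    intro Γ hG a b ha hb haS hbS
    -- every edge is S-colored
    have hempty : (∅ : Finset V) ∈ Γ := hG.closed _ ha _ (Finset.empty_subset _)
    have hlink : link Γ (∅ : Finset V) = Γ := by
      ext H
      exact ⟨fun h => h.1, fun h => ⟨h, Finset.disjoint_empty_left _, by simpa using h⟩⟩
    have hconn : Conn Γ := by
      have := hG.links ∅ hempty (by simp)
      rwa [hlink] at this
    have raw := hconn a b ha hb
    have edgeS : ∀ x y : V, ({x, y} : Finset V) ∈ Γ → x ≠ y → κ x ∈ S ∧ κ y ∈ S := by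
      intro x y hxy hne
      obtain ⟨F, hFmem, hsub, hcard⟩ := hG.toFacet _ hxy
      have hcard2 : ({x, y} : Finset V).card = 2 := Finset.card_pair hne
      have hFeq : ({x, y} : Finset V) = F :=
        Finset.eq_of_subset_of_card_le hsub (by omega)
      obtain ⟨s1, s2, hs12, hSeq⟩ := Finset.card_eq_two.1 hS
      have hs1 : s1 ∈ S := by rw [hSeq]; simp
      have hs2 : s2 ∈ S := by rw [hSeq]; simp
      obtain ⟨u1, hu1, hku1⟩ := hG.scond F hFmem hcard s1 hs1
      obtain ⟨u2, hu2, hku2⟩ := hG.scond F hFmem hcard s2 hs2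
      have hu12 : u1 ≠ u2 := fun h => hs12 (by rw [← hku1, h, hku2])
      rw [← hFeq] at hu1 hu2
      rw [Finset.mem_insert, Finset.mem_singleton] at hu1 hu2
      rcases hu1 with rfl | rfl <;> rcases hu2 with rfl | rfl <;>
        first
        | exact absurd rfl hu12
        | (constructor <;> simp [hku1, hku2, hs1, hs2, *])
    clear ha hb hbS
    induction raw with
    | refl => exact Relation.ReflTransGen.refl
    | tail hpath hst ih =>
      rename_i v w
      by_cases hvw : v = w
      · exact hvw ▸ ih
      · exact (ih).tail ⟨hst, edgeS v w hst hvw⟩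
  | succ m hm IH =>
    intro Γ hG a b ha hb haS hbS
    set Srel := fun x y : V => ({x, y} : Finset V) ∈ Γ ∧ κ x ∈ S ∧ κ y ∈ S with hSrel
    -- claim (ii): S-neighbors of a common vertex are Srel-connected
    have sc2 : ∀ x a' b' : V, ({x, a'} : Finset V) ∈ Γ → ({x, b'} : Finset V) ∈ Γ →
        κ a' ∈ S → κ b' ∈ S → Relation.ReflTransGen Srel a' b' := by
      intro x a' b' ha' hb' ha'S hb'S
      by_cases hxS : κ x ∈ S
      · refine Relation.ReflTransGen.tail (Relation.ReflTransGen.single ?_) ⟨hb', hxS, hb'S⟩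
        exact ⟨Finset.pair_comm a' x ▸ ha', ha'S, hxS⟩
      · have hxmem : ({x} : Finset V) ∈ Γ :=
          hG.closed _ ha' _ (by simp)
        have hane : a' ≠ x := fun h => hxS (h ▸ ha'S)
        have hbne : b' ≠ x := fun h => hxS (h ▸ hb'S)
        have hG' : GoodAux κ (link Γ {x}) m S := by
          have := goodAux_link hG hxmem hxS (by omega)
          simpa using this
        have hmema : ({a'} : Finset V) ∈ link Γ {x} := by
          refine ⟨hG.closed _ ha' _ (by simp), by simpa using Ne.symm hane, ?_⟩
          rwa [← Finset.insert_eq]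
        have hmemb : ({b'} : Finset V) ∈ link Γ {x} := by
          refine ⟨hG.closed _ hb' _ (by simp), by simpa using Ne.symm hbne, ?_⟩
          rwa [← Finset.insert_eq]
        have hpath := IH (link Γ {x}) hG' a' b' hmema hmemb ha'S hb'S
        exact Relation.ReflTransGen.mono (p := Srel) (fun p q hpq => ⟨hpq.1.1, hpq.2⟩) _ _ hpath
    -- Γ is connected
    have hempty : (∅ : Finset V) ∈ Γ := hG.closed _ ha _ (Finset.empty_subset _)
    have hlink : link Γ (∅ : Finset V) = Γ := by
      ext H
      exact ⟨fun h => h.1, fun h => ⟨h, Finset.disjoint_empty_left _, by simpa using h⟩⟩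
    have hconn : Conn Γ := by
      have := hG.links ∅ hempty (by simp; omega)
      rwa [hlink] at this
    have raw := hconn a b ha hb
    obtain ⟨s1, hs1⟩ : ∃ s, s ∈ S := Finset.card_pos.1 (by omega) |>.exists_mem
    have main : ∀ y : V, Relation.ReflTransGen (fun p q => ({p, q} : Finset V) ∈ Γ) a y →
        ∀ b' : V, ({y, b'} : Finset V) ∈ Γ → κ b' ∈ S →
        Relation.ReflTransGen Srel a b' := by
      intro y hy
      induction hy with
      | refl =>
        intro b' hb' hb'S
        exact sc2 a a b' (by simpa using ha) hb' haS hb'S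
      | tail hpath hst ih =>
        rename_i v w
        intro b' hb' hb'S
        obtain ⟨F, hFmem, hsub, hcard⟩ := hG.toFacet _ hst
        obtain ⟨c, hcF, hkc⟩ := hG.scond F hFmem hcard s1 hs1
        have hcS : κ c ∈ S := hkc ▸ hs1
        have hvc : ({v, c} : Finset V) ∈ Γ := hG.closed F hFmem _
          (Finset.insert_subset_iff.2 ⟨hsub (by simp),
            Finset.singleton_subset_iff.2 hcF⟩)
        have hwc : ({w, c} : Finset V) ∈ Γ := hG.closed F hFmem _
          (Finset.insert_subset_iff.2 ⟨hsub (by simp),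
            Finset.singleton_subset_iff.2 hcF⟩)
        exact (ih c hvc hcS).trans (sc2 w c b' hwc hb' hcS hb'S)
    exact main b raw b (by simpa using hb) hbS

theorem exists_facet {V : Type*} [Fintype V] [DecidableEq V] (Δ : Set (Finset V))
    {F : Finset V} (hF : F ∈ Δ) : ∃ G, IsFacet Δ G ∧ F ⊆ G := by
  classical
  obtain ⟨G, hGs, hmax⟩ := Set.Finite.exists_maximalFor Finset.card
    {G | G ∈ Δ ∧ F ⊆ G} (Set.toFinite _) ⟨F, hF, subset_rfl⟩
  refine ⟨G, ⟨hGs.1, ?_⟩, hGs.2⟩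
  intro G' hG' hsub
  have hc : G.card = G'.card := le_antisymm (Finset.card_le_card hsub) (hmax ⟨hG', hGs.2.trans hsub⟩ (Finset.card_le_card hsub))
  exact (Finset.eq_of_subset_of_card_le hsub (le_of_eq hc.symm)).symm

/-- If `Δ` is a `(d-1)`-dimensional simplicial complex, `d ≥ 2`,
satisfying properties (I)–(III), `S` a set of two colors, and `T` any spanning tree of
the 1-skeleton of `Δ`, then the group `G(Δ, T)` is generated by the images of the
generators `(v, v')` with `{v, v'} ∈ Δ_S`. -/
theorem presentedGroup_generated_by_rankSel {V : Type*} [Fintype V] [DecidableEq V]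
    (d : ℕ) (hd : 2 ≤ d) (Δ : Set (Finset V)) (κ : V → Fin d)
    (hcplx : IsComplex Δ) (hdim : HasDim Δ d)
    (hI : IsPure Δ d) (hII : IsBalanced Δ κ) (hIII : LinksConn Δ d)
    (S : Finset (Fin d)) (hS : S.card = 2)
    (T : SimpleGraph V) (hT : T.IsTree)
    (hTsub : ∀ a b : V, T.Adj a b → ({a, b} : Finset V) ∈ Δ) :
    Subgroup.closure
      {g : PresentedGroup (GRels Δ T) |
        ∃ p : EdgeGen Δ, ({p.1.1, p.1.2} : Finset V) ∈ rankSel Δ κ S ∧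
          g = PresentedGroup.of p} = ⊤ := by
  classical
  set H := Subgroup.closure
      {g : PresentedGroup (GRels Δ T) |
        ∃ p : EdgeGen Δ, ({p.1.1, p.1.2} : Finset V) ∈ rankSel Δ κ S ∧
          g = PresentedGroup.of p} with hHdef
  have subΔ : ∀ {F G : Finset V}, F ∈ Δ → G ⊆ F → G ∈ Δ :=
    fun hF hGF => hcplx.1 _ hF _ hGF
  -- relators are trivial
  have relone : ∀ r ∈ GRels Δ T, PresentedGroup.mk (GRels Δ T) r = 1 := by
    intro r hr
    exact (QuotientGroup.eq_one_iff r).mpr (Subgroup.subset_normalClosure hr)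
  have tri : ∀ (x y z : V) (h1 : ({x, y} : Finset V) ∈ Δ) (h2 : ({y, z} : Finset V) ∈ Δ)
      (h3 : ({x, z} : Finset V) ∈ Δ), ({x, y, z} : Finset V) ∈ Δ →
      (PresentedGroup.of ⟨(x, y), h1⟩ : PresentedGroup (GRels Δ T)) *
        PresentedGroup.of ⟨(y, z), h2⟩ = PresentedGroup.of ⟨(x, z), h3⟩ := by
    intro x y z h1 h2 h3 ht
    have hr : (FreeGroup.of (⟨(x, y), h1⟩ : EdgeGen Δ) * FreeGroup.of ⟨(y, z), h2⟩ *
        (FreeGroup.of ⟨(x, z), h3⟩)⁻¹) ∈ GRels Δ T :=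
      Or.inr ⟨x, y, z, h1, h2, h3, ht, rfl⟩
    have h := relone _ hr
    erw [map_mul, map_mul, map_inv] at h
    exact mul_inv_eq_one.mp h
  have treeRel : ∀ (a b : V) (hab : T.Adj a b) (h : ({a, b} : Finset V) ∈ Δ),
      (PresentedGroup.of ⟨(a, b), h⟩ : PresentedGroup (GRels Δ T)) = 1 := by
    intro a b hab h
    exact relone _ (Or.inl ⟨⟨(a, b), h⟩, hab, rfl⟩)
  have selfRel : ∀ (a : V) (h : ({a, a} : Finset V) ∈ Δ),
      (PresentedGroup.of ⟨(a, a), h⟩ : PresentedGroup (GRels Δ T)) = 1 := by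
    intro a h
    have ht : ({a, a, a} : Finset V) ∈ Δ := by simpa using hcplx.2 a
    have h2 := tri a a a h h h ht
    exact mul_right_cancel (h2.trans (one_mul _).symm)
  have invRel : ∀ (a b : V) (h : ({a, b} : Finset V) ∈ Δ) (h' : ({b, a} : Finset V) ∈ Δ),
      (PresentedGroup.of ⟨(b, a), h'⟩ : PresentedGroup (GRels Δ T)) =
        (PresentedGroup.of ⟨(a, b), h⟩)⁻¹ := by
    intro a b h h'
    have haa : ({a, a} : Finset V) ∈ Δ := by simpa using hcplx.2 a
    have ht : ({a, b, a} : Finset V) ∈ Δ := by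
      have : ({a, b, a} : Finset V) = {a, b} := by ext t; simp; tauto
      rw [this]; exact h
    have h2 := tri a b a h h' haa ht
    rw [selfRel a haa] at h2
    exact eq_inv_of_mul_eq_one_right h2
  have memH : ∀ (v w : V) (h : ({v, w} : Finset V) ∈ Δ), κ v ∈ S → κ w ∈ S →
      (PresentedGroup.of ⟨(v, w), h⟩ : PresentedGroup (GRels Δ T)) ∈ H := by
    intro v w h hv hw
    apply Subgroup.subset_closure
    refine ⟨⟨(v, w), h⟩, ⟨h, ?_⟩, rfl⟩
    intro u hu
    rcases Finset.mem_insert.1 hu with rfl | hu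
    · exact hv
    · rw [Finset.mem_singleton.1 hu]; exact hw
  -- Δ is GoodAux
  obtain ⟨s1, hs1⟩ : ∃ s, s ∈ S := Finset.card_pos.1 (by omega) |>.exists_mem
  have hGood : GoodAux κ Δ d S := by
    refine ⟨fun F hF G hGF => hcplx.1 F hF G hGF, hdim.1, ?_, hIII, hII, ?_⟩
    · intro F hF
      obtain ⟨G, hfac, hsub⟩ := exists_facet Δ hF
      exact ⟨G, hfac.1, hsub, hI G hfac⟩
    · intro F hF hcard s hs
      have hinj : Set.InjOn κ ↑F := hII F hF
      have himg : F.image κ = Finset.univ := Finset.eq_univ_of_card _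
        (by rw [Finset.card_image_of_injOn hinj, hcard, Fintype.card_fin])
      have : s ∈ F.image κ := himg ▸ Finset.mem_univ s
      obtain ⟨v, hv, hkv⟩ := Finset.mem_image.1 this
      exact ⟨v, hv, hkv⟩
  -- transfer: one good S-neighbor gives all S-neighbors
  have transfer : ∀ w : V,
      (∃ (a0 : V) (h0 : ({w, a0} : Finset V) ∈ Δ), κ a0 ∈ S ∧
        (PresentedGroup.of ⟨(w, a0), h0⟩ : PresentedGroup (GRels Δ T)) ∈ H) →
      ∀ (a : V) (h : ({w, a} : Finset V) ∈ Δ), κ a ∈ S →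
        (PresentedGroup.of ⟨(w, a), h⟩ : PresentedGroup (GRels Δ T)) ∈ H := by
    rintro w ⟨a0, h0, ha0S, hmem0⟩ a h haS
    by_cases hwS : κ w ∈ S
    · exact memH w a h hwS haS
    · have hd3 : 3 ≤ d := by
        by_contra hlt
        have hd2 : d = 2 := by omega
        have : S = Finset.univ := Finset.eq_univ_of_card S (by
          simp [hS, hd2])
        exact hwS (this ▸ Finset.mem_univ _)
      have hwmem : ({w} : Finset V) ∈ Δ := hcplx.2 w
      have hGl : GoodAux κ (link Δ {w}) (d - 1) S := goodAux_link hGood hwmem hwS (by omega)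
      have ha0ne : a0 ≠ w := fun hh => hwS (hh ▸ ha0S)
      have hane : a ≠ w := fun hh => hwS (hh ▸ haS)
      have hm0 : ({a0} : Finset V) ∈ link Δ {w} := by
        refine ⟨hcplx.2 a0, by simpa using Ne.symm ha0ne, ?_⟩
        rwa [← Finset.insert_eq]
      have hma : ({a} : Finset V) ∈ link Δ {w} := by
        refine ⟨hcplx.2 a, by simpa using Ne.symm hane, ?_⟩
        rwa [← Finset.insert_eq]
      have hpath := rankSel_conn κ S hS (d - 1) (by omega) _ hGl a0 a hm0 hma ha0S haS
      have step : ∀ y : V,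
          Relation.ReflTransGen
            (fun x y => ({x, y} : Finset V) ∈ link Δ {w} ∧ κ x ∈ S ∧ κ y ∈ S) a0 y →
          ∀ (hy : ({w, y} : Finset V) ∈ Δ),
            (PresentedGroup.of ⟨(w, y), hy⟩ : PresentedGroup (GRels Δ T)) ∈ H := by
        intro y hy
        induction hy with
        | refl => intro hy; exact hmem0
        | tail hp hst ih =>
          rename_i x y
          intro hy
          obtain ⟨⟨hxyΔ, hdisj, huni⟩, hxS, hyS⟩ := hst
          have hface : ({w, x, y} : Finset V) ∈ Δ := by
            rwa [← Finset.insert_eq] at huni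
          have hwx : ({w, x} : Finset V) ∈ Δ := subΔ hface (by
            intro t ht; simp at ht ⊢; tauto)
          have h2 := tri w x y hwx hxyΔ hy hface
          rw [← h2]
          exact H.mul_mem (ih hwx) (memH x y hxyΔ hxS hyS)
      exact step a hpath h
  -- root vertex with color in S
  obtain ⟨F0, hF0, hF0card⟩ := hdim.2
  obtain ⟨r, hrF0, hkr⟩ := hGood.scond F0 hF0 hF0card s1 hs1
  have hrS : κ r ∈ S := hkr ▸ hs1
  -- claim C at every vertex, by induction along the tree
  have Call : ∀ (v a : V) (h : ({v, a} : Finset V) ∈ Δ), κ a ∈ S →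
      (PresentedGroup.of ⟨(v, a), h⟩ : PresentedGroup (GRels Δ T)) ∈ H := by
    have key : ∀ v : V, Relation.ReflTransGen T.Adj r v →
        ∀ (a : V) (h : ({v, a} : Finset V) ∈ Δ), κ a ∈ S →
        (PresentedGroup.of ⟨(v, a), h⟩ : PresentedGroup (GRels Δ T)) ∈ H := by
      intro v hreach
      induction hreach with
      | refl =>
        apply transfer r
        refine ⟨r, by simpa using hcplx.2 r, hrS, ?_⟩
        rw [selfRel r _]
        exact H.one_mem
      | tail hp hadj ih =>
        rename_i v w
        apply transfer w
        have hvw : ({v, w} : Finset V) ∈ Δ := hTsub v w hadj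
        by_cases hwS : κ w ∈ S
        · refine ⟨w, by simpa using hcplx.2 w, hwS, ?_⟩
          rw [selfRel w _]
          exact H.one_mem
        · obtain ⟨F, hfac, hsub⟩ := exists_facet Δ hvw
          have hFmem : F ∈ Δ := hfac.1
          have hFcard : F.card = d := hI F hfac
          obtain ⟨c, hcF, hkc⟩ := hGood.scond F hFmem hFcard s1 hs1
          have hcS : κ c ∈ S := hkc ▸ hs1
          have hvF : v ∈ F := hsub (by simp)
          have hwF : w ∈ F := hsub (by simp)
          have hwc : ({w, c} : Finset V) ∈ Δ := subΔ hFmem (by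
            intro t ht; simp at ht; rcases ht with rfl | rfl <;> assumption)
          refine ⟨c, hwc, hcS, ?_⟩
          by_cases hcv : c = v
          · subst hcv
            rw [treeRel w c hadj.symm hwc]
            exact H.one_mem
          · have hwv : ({w, v} : Finset V) ∈ Δ := subΔ hFmem (by
              intro t ht; simp at ht; rcases ht with rfl | rfl <;> assumption)
            have hvc : ({v, c} : Finset V) ∈ Δ := subΔ hFmem (by
              intro t ht; simp at ht; rcases ht with rfl | rfl <;> assumption)
            have hface : ({w, v, c} : Finset V) ∈ Δ := subΔ hFmem (by
              intro t ht; simp at ht; rcases ht with rfl | rfl | rfl <;> assumption)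
            have h2 := tri w v c hwv hvc hwc hface
            rw [← h2]
            refine H.mul_mem ?_ (ih c hvc hcS)
            rw [treeRel w v hadj.symm hwv]
            exact H.one_mem
    intro v
    exact key v ((SimpleGraph.reachable_iff_reflTransGen r v).1
      (hT.isConnected.preconnected r v))
  -- conclude
  rw [Subgroup.eq_top_iff']
  intro x
  refine PresentedGroup.generated_by _ _ ?_ x
  rintro ⟨⟨v, w⟩, h⟩
  obtain ⟨F, hfac, hsub⟩ := exists_facet Δ h
  have hFmem : F ∈ Δ := hfac.1
  have hFcard : F.card = d := hI F hfac
  obtain ⟨c, hcF, hkc⟩ := hGood.scond F hFmem hFcard s1 hs1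
  have hcS : κ c ∈ S := hkc ▸ hs1
  have hvF : v ∈ F := hsub (by simp)
  have hwF : w ∈ F := hsub (by simp)
  have hvc : ({v, c} : Finset V) ∈ Δ := subΔ hFmem (by
    intro t ht; simp at ht; rcases ht with rfl | rfl <;> assumption)
  have hcw : ({c, w} : Finset V) ∈ Δ := subΔ hFmem (by
    intro t ht; simp at ht; rcases ht with rfl | rfl <;> assumption)
  have hwc : ({w, c} : Finset V) ∈ Δ := subΔ hFmem (by
    intro t ht; simp at ht; rcases ht with rfl | rfl <;> assumption)
  have hface : ({v, c, w} : Finset V) ∈ Δ := subΔ hFmem (by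
    intro t ht; simp at ht; rcases ht with rfl | rfl | rfl <;> assumption)
  have h2 := tri v c w hvc hcw h hface
  rw [← h2]
  refine H.mul_mem (Call v c hvc hcS) ?_
  rw [invRel w c hwc hcw]
  exact H.inv_mem (Call w c hwc hcS)
end

section
/- Let P be a simplicial poset of rank d ≥ 2 satisfying properties (i)–(iii). Then P is strongly connected: for all facets σ, σ′ ∈ P there is a chain of facets σ = σ_0, σ_1, …, σ_m = σ′ and faces τ_0, …, τ_{m−1} of rank d−1 such that τ_i is covered by both σ_i and σ_{i+1} for all 0 ≤ i ≤ m−1. -/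
/-- `P` (a finite poset with least element `⊥`) is a simplicial poset with rank
function `rk`: every lower interval `[⊥, x]` is isomorphic to the Boolean lattice of
subsets of an `rk x`-element set. -/
def IsSimplicialPoset (P : Type*) [PartialOrder P] [OrderBot P] (rk : P → ℕ) : Prop :=
  ∀ x : P, Nonempty (Set.Icc (⊥ : P) x ≃o Finset (Fin (rk x)))

section Aux
variable {P : Type*} [PartialOrder P] [OrderBot P] {rk : P → ℕ}

lemma rk_eq_card (hSP : IsSimplicialPoset P rk) {x y : P} (hy : y ≤ x)
    (f : Set.Icc (⊥ : P) x ≃o Finset (Fin (rk x))) :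
    rk y = (f ⟨y, bot_le, hy⟩).card := by
  set T : Finset (Fin (rk x)) := f ⟨y, bot_le, hy⟩ with hT
  have e1 : Set.Icc (⊥ : P) y ≃ {s : Finset (Fin (rk x)) // s ⊆ T} :=
    { toFun := fun z => ⟨f ⟨z.1, bot_le, z.2.2.trans hy⟩, by
        have : (⟨z.1, bot_le, z.2.2.trans hy⟩ : Set.Icc (⊥ : P) x) ≤ ⟨y, bot_le, hy⟩ :=
          z.2.2
        exact Finset.le_iff_subset.mp (f.monotone this)⟩
      invFun := fun s => ⟨(f.symm s.1).1, (f.symm s.1).2.1, by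
        have : f.symm s.1 ≤ f.symm T := f.symm.monotone (Finset.le_iff_subset.mpr s.2)
        have h2 : f.symm s.1 ≤ ⟨y, bot_le, hy⟩ := by simpa [hT] using this
        exact h2⟩
      left_inv := fun z => by simp
      right_inv := fun s => Subtype.ext (by
        show f (f.symm s.1) = s.1
        exact f.apply_symm_apply s.1) }
  have e2 := (hSP y).some
  have c1 : Nat.card (Set.Icc (⊥ : P) y) = 2 ^ rk y := by
    rw [Nat.card_congr e2.toEquiv]
    simp [Nat.card_eq_fintype_card, Fintype.card_finset]
  have c2 : Nat.card (Set.Icc (⊥ : P) y) = 2 ^ T.card := by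
    rw [Nat.card_congr e1, Nat.card_congr (Equiv.subtypeEquivRight
      (fun s => (Finset.mem_powerset (s := s) (t := T)).symm)),
      Nat.card_eq_fintype_card, Fintype.card_coe, Finset.card_powerset]
  exact Nat.pow_right_injective (le_refl 2) (c1.symm.trans c2)

lemma rk_lt_of_lt (hSP : IsSimplicialPoset P rk) {x y : P} (h : x < y) : rk x < rk y := by
  obtain ⟨f⟩ := hSP y
  have h1 := rk_eq_card hSP h.le f
  have h2 := rk_eq_card hSP (le_refl y) f
  have : (⟨x, bot_le, h.le⟩ : Set.Icc (⊥ : P) y) < ⟨y, bot_le, le_refl y⟩ := h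
  have hc := Finset.card_lt_card (f.strictMono this)
  omega

lemma eq_of_le_rk (hSP : IsSimplicialPoset P rk) {x y : P} (h : x ≤ y)
    (hr : rk y ≤ rk x) : x = y := by
  rcases h.lt_or_eq with hlt | he
  · exact absurd (rk_lt_of_lt hSP hlt) (by omega)
  · exact he

lemma exists_mid (hSP : IsSimplicialPoset P rk) {x y : P} (h : x ≤ y)
    (hr : rk x < rk y) : ∃ v : P, x < v ∧ v ≤ y ∧ rk v = rk x + 1 := by
  obtain ⟨f⟩ := hSP y
  set s : Finset (Fin (rk y)) := f ⟨x, bot_le, h⟩ with hs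
  set t : Finset (Fin (rk y)) := f ⟨y, bot_le, le_refl y⟩ with ht
  have hsc : s.card = rk x := (rk_eq_card hSP h f).symm
  have htc : t.card = rk y := (rk_eq_card hSP (le_refl y) f).symm
  have hst : s ⊆ t := Finset.le_iff_subset.mp
    (f.monotone (show (⟨x, bot_le, h⟩ : Set.Icc (⊥ : P) y) ≤ ⟨y, bot_le, le_refl y⟩ from h))
  have hcard : 1 + s.card ≤ t.card := by omega
  obtain ⟨u, hsu, hut, huc⟩ := Finset.exists_subsuperset_card_eq hst (by omega : s.card ≤ 1 + s.card) hcard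
  refine ⟨(f.symm u).1, ?_, ?_, ?_⟩
  · have hsu' : s < u := lt_of_le_of_ne (Finset.le_iff_subset.mpr hsu)
      (by intro he; rw [← he] at huc; omega)
    have := f.symm.strictMono hsu'
    rw [hs] at this
    simp at this
    exact this
  · have : f.symm u ≤ f.symm t := f.symm.monotone (Finset.le_iff_subset.mpr hut)
    rw [ht] at this
    simp at this
    exact this
  · have hv : ((f.symm u).1 : P) ≤ y := by
      have : f.symm u ≤ f.symm t := f.symm.monotone (Finset.le_iff_subset.mpr hut)
      rw [ht] at this; simp at this; exact this
    have := rk_eq_card hSP hv f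
    have he : (⟨(f.symm u).1, bot_le, hv⟩ : Set.Icc (⊥ : P) y) = f.symm u :=
      Subtype.ext rfl
    rw [he] at this
    simp only [OrderIso.apply_symm_apply] at this
    omega

end Aux

/-- `P` has rank `d`. -/
def PosetRank {P : Type*} (rk : P → ℕ) (d : ℕ) : Prop :=
  (∀ x : P, rk x ≤ d) ∧ ∃ x : P, rk x = d

/-- Property (i): `P` is pure, i.e. every facet (maximal element) has rank `d`. -/
def PosetPure {P : Type*} [PartialOrder P] (rk : P → ℕ) (d : ℕ) : Prop :=
  ∀ x : P, IsMax x → rk x = d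

/-- Property (ii): `P` is balanced with respect to the coloring `κ` of its vertices
by `d` colors: distinct vertices lying below a common facet receive distinct colors. -/
def PosetBalanced {P : Type*} [PartialOrder P] {d : ℕ} (rk : P → ℕ) (κ : P → Fin d) :
    Prop :=
  ∀ σ : P, IsMax σ → ∀ v w : P, rk v = 1 → rk w = 1 → v ≤ σ → w ≤ σ → v ≠ w → κ v ≠ κ w

/-- The link `lk_P τ = {σ ∈ P : σ ≥ τ}` is connected: any two of its vertices (the
elements of rank `rk τ + 1` above `τ`) are joined by a path of rank-2 elements of the
link (the elements of rank `rk τ + 2` above `τ`). -/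
def ConnAbove {P : Type*} [PartialOrder P] (rk : P → ℕ) (τ : P) : Prop :=
  ∀ v w : P, τ < v → rk v = rk τ + 1 → τ < w → rk w = rk τ + 1 →
    Relation.ReflTransGen
      (fun a b => τ < a ∧ τ < b ∧ rk a = rk τ + 1 ∧ rk b = rk τ + 1 ∧
        ∃ e : P, a ≤ e ∧ b ≤ e ∧ rk e = rk τ + 2) v w

/-- Property (iii): the link of every face of rank `< d - 1` (including `⊥`, so in
particular `P` itself) is connected. -/
def PosetLinksConn {P : Type*} [PartialOrder P] (rk : P → ℕ) (d : ℕ) : Prop :=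
  ∀ σ : P, rk σ < d - 1 → ConnAbove rk σ

/-- A simplicial poset of rank `d ≥ 2` satisfying properties
(i)–(iii) is strongly connected: any two facets are joined by a chain of facets in
which consecutive facets both cover a common face of rank `d - 1`. -/
theorem poset_stronglyConnected {P : Type*} [Fintype P] [PartialOrder P] [OrderBot P]
    (rk : P → ℕ) (d : ℕ) (hd : 2 ≤ d) (κ : P → Fin d)
    (hSP : IsSimplicialPoset P rk) (hrk : PosetRank rk d)
    (hi : PosetPure rk d) (hii : PosetBalanced rk κ) (hiii : PosetLinksConn rk d) :
    ∀ σ σ' : P, IsMax σ → IsMax σ' →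
      Relation.ReflTransGen
        (fun a b => IsMax a ∧ IsMax b ∧ ∃ τ : P, rk τ = d - 1 ∧ τ ⋖ a ∧ τ ⋖ b) σ σ' := by
  
  intro σ σ' hσ hσ'
  set R : P → P → Prop :=
    fun a b => IsMax a ∧ IsMax b ∧ ∃ τ : P, rk τ = d - 1 ∧ τ ⋖ a ∧ τ ⋖ b with hR
  have hmaxrk : ∀ x : P, IsMax x → rk x = d := hi
  have hexmax : ∀ e : P, ∃ ρ : P, e ≤ ρ ∧ IsMax ρ := by
    intro e
    obtain ⟨b, hb, hbmax⟩ := Finite.exists_le_maximal (p := fun _ : P => True) trivial (a := e)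
    exact ⟨b, hb, fun y hy => hbmax.2 trivial hy⟩
  have key : ∀ n : ℕ, ∀ τ σ σ' : P, d - rk τ ≤ n → IsMax σ → IsMax σ' →
      τ ≤ σ → τ ≤ σ' → Relation.ReflTransGen R σ σ' := by
    intro n
    induction n with
    | zero =>
      intro τ σ σ' hn hσ hσ' hτσ hτσ'
      have h1 : rk τ ≤ d := hrk.1 τ
      have h2 : rk σ = d := hi σ hσ
      have h3 : rk σ' = d := hi σ' hσ'
      have e1 : τ = σ := eq_of_le_rk hSP hτσ (by omega)
      have e2 : τ = σ' := eq_of_le_rk hSP hτσ' (by omega)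
      rw [← e1, ← e2]
    | succ n ih =>
      intro τ σ σ' hn hσ hσ' hτσ hτσ'
      have hrd : rk τ ≤ d := hrk.1 τ
      have h2 : rk σ = d := hi σ hσ
      have h3 : rk σ' = d := hi σ' hσ'
      by_cases hc1 : rk τ = d
      · have e1 : τ = σ := eq_of_le_rk hSP hτσ (by omega)
        have e2 : τ = σ' := eq_of_le_rk hSP hτσ' (by omega)
        rw [← e1, ← e2]
      by_cases hc2 : rk τ = d - 1
      · have cov : ∀ ρ : P, IsMax ρ → τ ≤ ρ → τ ⋖ ρ := by
          intro ρ hρ hτρ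
          have hrρ : rk ρ = d := hi ρ hρ
          have hlt : τ < ρ := lt_of_le_of_ne hτρ (by
            intro he; rw [he] at hc2; omega)
          refine ⟨hlt, fun c hc hcρ => ?_⟩
          have r1 := rk_lt_of_lt hSP hc
          have r2 := rk_lt_of_lt hSP hcρ
          omega
        exact Relation.ReflTransGen.single ⟨hσ, hσ', τ, hc2, cov σ hσ hτσ, cov σ' hσ' hτσ'⟩
      · have hlt : rk τ < d - 1 := by omega
        obtain ⟨v, hτv, hvσ, hrv⟩ := exists_mid hSP hτσ (by omega)
        obtain ⟨w, hτw, hwσ', hrw⟩ := exists_mid hSP hτσ' (by omega)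
        have hpath := hiii τ hlt v w hτv hrv hτw hrw
        have Q : ∀ b : P, Relation.ReflTransGen
            (fun a b => τ < a ∧ τ < b ∧ rk a = rk τ + 1 ∧ rk b = rk τ + 1 ∧
              ∃ e : P, a ≤ e ∧ b ≤ e ∧ rk e = rk τ + 2) v b →
            ∀ ρ : P, IsMax ρ → b ≤ ρ → Relation.ReflTransGen R σ ρ := by
          intro b hb
          induction hb with
          | refl =>
            intro ρ hρ hvρ
            exact ih v σ ρ (by omega) hσ hρ hvσ hvρ
          | @tail b c hvb hbc ihQ =>
            intro ρ hρ hcρ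
            obtain ⟨_, _, hrb, hrc, e, hbe, hce, hre⟩ := hbc
            obtain ⟨ρe, heρe, hρe⟩ := hexmax e
            have step1 := ihQ ρe hρe (hbe.trans heρe)
            have step2 := ih c ρe ρ (by omega) hρe hρ (hce.trans heρe) hcρ
            exact step1.trans step2
        exact Q w hpath σ' hσ' hwσ'
  exact key d ⊥ σ σ' (Nat.sub_le d (rk ⊥)) hσ hσ' bot_le bot_le
end
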